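/- Let K be the 2×2 matrix K = [[0,1],[−1,0]], let σ ∈ ℝ, and let ρ, b : ℝ² → ℝ be twice continuously differentiable with b(x) ≠ 0 for all x. Then for every x ∈ ℝ², ∇·( σ K ∇ρ(x) / b(x) ) = ∇·( σ ρ(x) K ∇b(x) / b(x)² ). -/

import Mathlib

open ContinuousLinearMap

private lemma fderiv_mul_apply' {E : Type*} [NormedAddCommGroup E] [NormedSpace ℝ E]
    (f g : E → ℝ) {x : E} (v : E) (hf : DifferentiableAt ℝ f x) (hg : DifferentiableAt ℝ g x) :
    fderiv ℝ (fun y => f y * g y) x v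
      = fderiv ℝ f x v * g x + f x * fderiv ℝ g x v := by
  rw [fderiv_fun_mul hf hg]
  simp [smul_eq_mul]
  ring

private lemma fderiv_div_apply' {E : Type*} [NormedAddCommGroup E] [NormedSpace ℝ E]
    (f g : E → ℝ) {x : E} (v : E) (hf : DifferentiableAt ℝ f x) (hg : DifferentiableAt ℝ g x)
    (hgx : g x ≠ 0) :
    fderiv ℝ (fun y => f y / g y) x v
      = (fderiv ℝ f x v * g x - f x * fderiv ℝ g x v) / g x ^ 2 := by
  have hinv : HasFDerivAt (fun y => (g y)⁻¹)
      ((ContinuousLinearMap.smulRight (1 : ℝ →L[ℝ] ℝ) (-(g x ^ 2)⁻¹)).comp (fderiv ℝ g x)) x :=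
    (hasDerivAt_inv hgx).hasFDerivAt.comp x hg.hasFDerivAt
  have hmul := hf.hasFDerivAt.mul hinv
  simp only [div_eq_mul_inv]
  rw [show (fun y => f y * (g y)⁻¹) = f * fun y => (g y)⁻¹ from rfl, hmul.fderiv]
  simp only [ContinuousLinearMap.add_apply, ContinuousLinearMap.smul_apply,
    ContinuousLinearMap.comp_apply, ContinuousLinearMap.smulRight_apply,
    ContinuousLinearMap.one_apply, smul_eq_mul]
  field_simp
  ring

private lemma second_symm {E : Type*} [NormedAddCommGroup E] [NormedSpace ℝ E]
    (g : E → ℝ) (hg : ContDiff ℝ 2 g) (x v w : E) :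
    fderiv ℝ (fun y => fderiv ℝ g y v) x w = fderiv ℝ (fun y => fderiv ℝ g y w) x v := by
  have h1 : ContDiff ℝ 1 (fderiv ℝ g) := hg.fderiv_right (by norm_num)
  have hder : DifferentiableAt ℝ (fderiv ℝ g) x := (h1.differentiable one_ne_zero) x
  have key : ∀ u : E, fderiv ℝ (fun y => fderiv ℝ g y u) x
      = (fderiv ℝ (fderiv ℝ g) x).flip u := by
    intro u
    rw [fderiv_clm_apply hder (differentiableAt_const u)]
    simp
  rw [key v, key w]
  simpa using (hg.contDiffAt.isSymmSndFDerivAt (by simp)) w v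

private lemma termA {E : Type*} [NormedAddCommGroup E] [NormedSpace ℝ E]
    (c : ℝ) (g b : E → ℝ) {x : E} (v : E)
    (hg : DifferentiableAt ℝ g x) (hb : DifferentiableAt ℝ b x) (hbx : b x ≠ 0) :
    fderiv ℝ (fun y => c * g y / b y) x v
      = (c * fderiv ℝ g x v * b x - c * g x * fderiv ℝ b x v) / b x ^ 2 := by
  rw [fderiv_div_apply' (fun y => c * g y) b v (hg.const_mul c) hb hbx, fderiv_const_mul hg c]
  simp [smul_eq_mul]

private lemma termB {E : Type*} [NormedAddCommGroup E] [NormedSpace ℝ E]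
    (c : ℝ) (r g b : E → ℝ) {x : E} (v : E)
    (hr : DifferentiableAt ℝ r x) (hg : DifferentiableAt ℝ g x)
    (hb : DifferentiableAt ℝ b x) (hbx : b x ≠ 0) :
    fderiv ℝ (fun y => c * r y * g y / b y ^ 2) x v
      = ((c * fderiv ℝ r x v * g x + c * r x * fderiv ℝ g x v) * b x ^ 2
          - c * r x * g x * (fderiv ℝ b x v * b x + b x * fderiv ℝ b x v)) / b x ^ 4 := by
  have hb2 : (fun y => b y ^ 2) = fun y => b y * b y := by funext y; ring
  have hb2d : DifferentiableAt ℝ (fun y => b y ^ 2) x := by rw [hb2]; exact hb.mul hb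
  have hb2x : (fun y => b y ^ 2) x ≠ 0 := pow_ne_zero 2 hbx
  have hfd : DifferentiableAt ℝ (fun y => c * r y * g y) x := (hr.const_mul c).mul hg
  rw [fderiv_div_apply' (fun y => c * r y * g y) (fun y => b y ^ 2) v hfd hb2d hb2x]
  have e1 : fderiv ℝ (fun y => c * r y * g y) x v
      = c * fderiv ℝ r x v * g x + c * r x * fderiv ℝ g x v := by
    rw [fderiv_mul_apply' (fun y => c * r y) g v (hr.const_mul c) hg, fderiv_const_mul hr c]
    simp [smul_eq_mul]
  have e2 : fderiv ℝ (fun y => b y ^ 2) x v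
      = fderiv ℝ b x v * b x + b x * fderiv ℝ b x v := by
    rw [hb2, fderiv_mul_apply' b b v hb hb]
  rw [e1, e2]
  ring

/-- With `K = [[0,1],[-1,0]]`, `σ ∈ ℝ`, and `ρ, b : ℝ² → ℝ` of class `C²`
with `b` nowhere vanishing, for every `x`
`∇·(σ K ∇ρ / b) = ∇·(σ ρ K ∇b / b²)`. -/
theorem stmt_10 (σ : ℝ)
    (K : Matrix (Fin 2) (Fin 2) ℝ) (hK : K = !![0, 1; -1, 0])
    (ρ b : (Fin 2 → ℝ) → ℝ) (hρ : ContDiff ℝ 2 ρ) (hb : ContDiff ℝ 2 b)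
    (hbne : ∀ x : Fin 2 → ℝ, b x ≠ 0) :
    ∀ x : Fin 2 → ℝ,
      ∑ i : Fin 2,
          fderiv ℝ
            (fun y => σ * (K.mulVec (fun j => fderiv ℝ ρ y (Pi.single j 1))) i / b y) x
            (Pi.single i 1)
        = ∑ i : Fin 2,
            fderiv ℝ
              (fun y => σ * ρ y * (K.mulVec (fun j => fderiv ℝ b y (Pi.single j 1))) i
                  / b y ^ 2) x
              (Pi.single i 1) := by
  subst hK
  intro x
  have hL0 : (fun y => σ * (Matrix.mulVec !![(0:ℝ), 1; -1, 0]
        (fun j => fderiv ℝ ρ y (Pi.single j 1))) 0 / b y)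
      = fun y => σ * fderiv ℝ ρ y (Pi.single 1 1) / b y := by
    funext y; simp [Matrix.mulVec, dotProduct, Fin.sum_univ_two]
  have hL1 : (fun y => σ * (Matrix.mulVec !![(0:ℝ), 1; -1, 0]
        (fun j => fderiv ℝ ρ y (Pi.single j 1))) 1 / b y)
      = fun y => (-σ) * fderiv ℝ ρ y (Pi.single 0 1) / b y := by
    funext y; simp [Matrix.mulVec, dotProduct, Fin.sum_univ_two]
  have hR0 : (fun y => σ * ρ y * (Matrix.mulVec !![(0:ℝ), 1; -1, 0]
        (fun j => fderiv ℝ b y (Pi.single j 1))) 0 / b y ^ 2)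
      = fun y => σ * ρ y * fderiv ℝ b y (Pi.single 1 1) / b y ^ 2 := by
    funext y; simp [Matrix.mulVec, dotProduct, Fin.sum_univ_two]
  have hR1 : (fun y => σ * ρ y * (Matrix.mulVec !![(0:ℝ), 1; -1, 0]
        (fun j => fderiv ℝ b y (Pi.single j 1))) 1 / b y ^ 2)
      = fun y => (-σ) * ρ y * fderiv ℝ b y (Pi.single 0 1) / b y ^ 2 := by
    funext y; simp [Matrix.mulVec, dotProduct, Fin.sum_univ_two]
  rw [Fin.sum_univ_two, Fin.sum_univ_two, hL0, hL1, hR0, hR1]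
  -- differentiability facts
  have hρd : Differentiable ℝ ρ := hρ.differentiable two_ne_zero
  have hbd : Differentiable ℝ b := hb.differentiable two_ne_zero
  have hDρ : ∀ i : Fin 2, DifferentiableAt ℝ (fun y => fderiv ℝ ρ y (Pi.single i 1)) x :=
    fun i => (((hρ.fderiv_right (m := 1) (by norm_num)).clm_apply contDiff_const).differentiable
      one_ne_zero) x
  have hDb : ∀ i : Fin 2, DifferentiableAt ℝ (fun y => fderiv ℝ b y (Pi.single i 1)) x :=
    fun i => (((hb.fderiv_right (m := 1) (by norm_num)).clm_apply contDiff_const).differentiable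
      one_ne_zero) x
  rw [termA σ _ b (Pi.single 0 1) (hDρ 1) (hbd x) (hbne x),
      termA (-σ) _ b (Pi.single 1 1) (hDρ 0) (hbd x) (hbne x),
      termB σ ρ _ b (Pi.single 0 1) (hρd x) (hDb 1) (hbd x) (hbne x),
      termB (-σ) ρ _ b (Pi.single 1 1) (hρd x) (hDb 0) (hbd x) (hbne x)]
  rw [second_symm ρ hρ x (Pi.single 1 1) (Pi.single 0 1),
      second_symm b hb x (Pi.single 1 1) (Pi.single 0 1)]
  have hbx := hbne x
  field_simp
  ring
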